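/- Let T0 and T1 be two balanced trees such that T0 ≼ T1 in the Tamari order. Then there exists k ≥ 0 such that the interval [T0, T1] = {T : T0 ≼ T ≼ T1}, partially ordered by ≼, is order-isomorphic to the poset of all subsets of a k-element set ordered by inclusion (the hypercube poset of dimension k). -/

import Mathlib

/-- Complete rooted planar binary trees. -/
inductive BTree where
  | leaf : BTree
  | node : BTree → BTree → BTree
  deriving DecidableEq

namespace BTree

/-- The height of a tree. -/
def ht : BTree → ℕ
  | leaf => 0
  | node l r => 1 + max l.ht r.ht

/-- The imbalance value of the root of a tree (`γ`). -/
def imb : BTree → ℤ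
  | leaf => 0
  | node l r => (r.ht : ℤ) - l.ht

/-- A tree is balanced if every node has imbalance value in {-1, 0, 1}. -/
def Balanced : BTree → Prop
  | leaf => True
  | node l r =>
      ((r.ht : ℤ) - l.ht = -1 ∨ (r.ht : ℤ) - l.ht = 0 ∨ (r.ht : ℤ) - l.ht = 1) ∧
      Balanced l ∧ Balanced r

/-- The subtree at a position (`false` = go left, `true` = go right). -/
def subtreeAt : BTree → List Bool → Option BTree
  | t, [] => some t
  | leaf, _ :: _ => none
  | node l _, false :: p => subtreeAt l p
  | node _ r, true :: p => subtreeAt r p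

/-- `p` is the position of an internal node of `t`. -/
def IsNodePos (t : BTree) (p : List Bool) : Prop :=
  ∃ l r, subtreeAt t p = some (node l r)

/-- Right rotation whose root `y` is at position `p`: the subtree
`(A ∧ B) ∧ C` at `p` is replaced by `A ∧ (B ∧ C)`. -/
inductive RotAt : BTree → List Bool → BTree → Prop
  | here (a b c : BTree) : RotAt (node (node a b) c) [] (node a (node b c))
  | left {l l' : BTree} (r : BTree) {p : List Bool} :
      RotAt l p l' → RotAt (node l r) (false :: p) (node l' r)
  | right (l : BTree) {r r' : BTree} {p : List Bool} :
      RotAt r p r' → RotAt (node l r) (true :: p) (node l r')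

/-- `t₁` is obtained from `t₀` by a single right rotation (`t₀ ⋌ t₁`). -/
def Rot (t₀ t₁ : BTree) : Prop := ∃ p, RotAt t₀ p t₁

/-- The Tamari order: reflexive transitive closure of right rotation. -/
def Tamari : BTree → BTree → Prop := Relation.ReflTransGen Rot

/-! ### Auxiliary development -/


def sz : BTree → ℕ
  | leaf => 1
  | node l r => sz l + sz r

theorem sz_pos (t : BTree) : 0 < sz t := by
  induction t with
  | leaf => simp [sz]
  | node l r ihl ihr => simp [sz]; omega

theorem rotAt_sz {t p t'} (h : RotAt t p t') : sz t' = sz t := by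
  induction h with
  | here a b c => simp [sz]; ring
  | left r _ ih => simp [sz, ih]
  | right l _ ih => simp [sz, ih]

theorem rot_sz {t t'} (h : Rot t t') : sz t' = sz t := by
  obtain ⟨p, h⟩ := h; exact rotAt_sz h

theorem tamari_sz {t t'} (h : Tamari t t') : sz t' = sz t := by
  induction h with
  | refl => rfl
  | tail _ h ih => rw [rot_sz h, ih]

theorem tamari_refl (t : BTree) : Tamari t t := Relation.ReflTransGen.refl

theorem tamari_trans {a b c} (h1 : Tamari a b) (h2 : Tamari b c) : Tamari a c :=
  Relation.ReflTransGen.trans h1 h2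

theorem rotAt_ne_leaf {t0 p t} (h : RotAt t0 p t) : t0 ≠ leaf := by
  cases h <;> simp

theorem rotAt_leaf {p t} (h : RotAt leaf p t) : False := rotAt_ne_leaf h rfl

theorem tamari_leaf {t} (h : Tamari leaf t) : t = leaf := by
  induction h with
  | refl => rfl
  | tail _ h ih =>
    subst ih
    obtain ⟨p, h'⟩ := h
    exact absurd h' rotAt_leaf

theorem tamari_node_congr {l l' r r'} (h1 : Tamari l l') (h2 : Tamari r r') :
    Tamari (node l r) (node l' r') := by
  refine tamari_trans (b := node l' r) ?_ ?_
  · exact Relation.ReflTransGen.lift (fun x => node x r)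
      (fun a b ⟨p, h⟩ => ⟨false :: p, RotAt.left r h⟩) _ _ h1
  · exact Relation.ReflTransGen.lift (fun x => node l' x)
      (fun a b ⟨p, h⟩ => ⟨true :: p, RotAt.right l' h⟩) _ _ h2

theorem tamari_rot_root (a b c : BTree) :
    Tamari (node (node a b) c) (node a (node b c)) :=
  Relation.ReflTransGen.single ⟨[], RotAt.here a b c⟩

/-- Chain decomposition: either no root rotation happens (componentwise chains),
or the chain factors through a first root rotation. -/
theorem decomp {L R T1} (h : Tamari (node L R) T1) :
    (∃ L1 R1, T1 = node L1 R1 ∧ Tamari L L1 ∧ Tamari R R1) ∨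
    (∃ A B R', Tamari L (node A B) ∧ Tamari R R' ∧ Tamari (node A (node B R')) T1) := by
  suffices H : ∀ T, Tamari T T1 → ∀ L R, T = node L R →
      (∃ L1 R1, T1 = node L1 R1 ∧ Tamari L L1 ∧ Tamari R R1) ∨
      (∃ A B R', Tamari L (node A B) ∧ Tamari R R' ∧ Tamari (node A (node B R')) T1) from
    H _ h L R rfl
  intro T hT
  induction hT using Relation.ReflTransGen.head_induction_on with
  | refl =>
    intro L R hEq
    exact Or.inl ⟨L, R, hEq, tamari_refl _, tamari_refl _⟩
  | head hstep htail ih =>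
    intro L R hEq
    subst hEq
    obtain ⟨p, hrot⟩ := hstep
    cases hrot with
    | here a b c =>
      exact Or.inr ⟨a, b, _, tamari_refl _, tamari_refl _, htail⟩
    | left r h' =>
      rcases ih _ _ rfl with ⟨L1, R1, hEq, h1, h2⟩ | ⟨A, B, R', h1, h2, h3⟩
      · exact Or.inl ⟨L1, R1, hEq, Relation.ReflTransGen.head ⟨_, h'⟩ h1, h2⟩
      · exact Or.inr ⟨A, B, R', Relation.ReflTransGen.head ⟨_, h'⟩ h1, h2, h3⟩
    | right l h' =>
      rcases ih _ _ rfl with ⟨L1, R1, hEq, h1, h2⟩ | ⟨A, B, R', h1, h2, h3⟩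
      · exact Or.inl ⟨L1, R1, hEq, h1, Relation.ReflTransGen.head ⟨_, h'⟩ h2⟩
      · exact Or.inr ⟨A, B, R', h1, Relation.ReflTransGen.head ⟨_, h'⟩ h2, h3⟩

/-- s-monotonicity: the target of a Tamari chain from a node is a node with
left size at most the original left size. -/
theorem tamari_node_inv {L R T1} (h : Tamari (node L R) T1) :
    ∃ L1 R1, T1 = node L1 R1 ∧ sz L1 ≤ sz L := by
  suffices H : ∀ T, Tamari T T1 → ∀ L R, T = node L R →
      ∃ L1 R1, T1 = node L1 R1 ∧ sz L1 ≤ sz L from H _ h L R rfl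
  intro T hT
  induction hT using Relation.ReflTransGen.head_induction_on with
  | refl => intro L R hEq; exact ⟨L, R, hEq, le_refl _⟩
  | head hstep htail ih =>
    intro L R hEq
    subst hEq
    obtain ⟨p, hrot⟩ := hstep
    cases hrot with
    | here a b c =>
      obtain ⟨L1, R1, hEq, hle⟩ := ih _ _ rfl
      exact ⟨L1, R1, hEq, by simp [sz] at hle ⊢; omega⟩
    | left r h' =>
      obtain ⟨L1, R1, hEq, hle⟩ := ih _ _ rfl
      exact ⟨L1, R1, hEq, by rw [rotAt_sz h'] at hle; exact hle⟩
    | right l h' =>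
      obtain ⟨L1, R1, hEq, hle⟩ := ih _ _ rfl
      exact ⟨L1, R1, hEq, hle⟩

/-- Product lemma: equal left sizes force componentwise chains. -/
theorem tamari_split {L R L1 R1} (h : Tamari (node L R) (node L1 R1))
    (hsz : sz L = sz L1) : Tamari L L1 ∧ Tamari R R1 := by
  rcases decomp h with ⟨L1', R1', hEq, h1, h2⟩ | ⟨A, B, R', h1, h2, h3⟩
  · cases hEq; exact ⟨h1, h2⟩
  · exfalso
    cases L with
    | leaf => exact absurd (tamari_leaf h1) (by simp)
    | node La Lb =>
      obtain ⟨A2, B2, hEq2, hle2⟩ := tamari_node_inv h1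
      injection hEq2 with e1 e2
      subst e1; subst e2
      obtain ⟨L2, R2, hEq3, hle3⟩ := tamari_node_inv h3
      injection hEq3 with e3 e4
      subst e3; subst e4
      have := sz_pos Lb
      have := sz_pos B
      simp [sz] at hsz hle2 hle3 ⊢
      omega

/-- Master decomposition: a chain from `(P∧Q)∧R` to `L1∧W` whose target left size
is `< sz P + sz Q` but `≥ sz P` must rotate the root exactly once "at level P". -/
theorem master {P Q R L1 W} (h : Tamari (node (node P Q) R) (node L1 W))
    (hlt : sz L1 < sz P + sz Q) (hge : sz P ≤ sz L1) :
    sz L1 = sz P ∧ Tamari P L1 ∧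
      ∃ B' R'', sz B' = sz Q ∧ Tamari Q B' ∧ Tamari R R'' ∧ Tamari (node B' R'') W := by
  rcases decomp h with ⟨L1', W', hEq, h1, h2⟩ | ⟨A, B, R', h1, h2, h3⟩
  · injection hEq with e1 e2; subst e1; subst e2
    have := tamari_sz h1
    simp [sz] at this
    omega
  · -- first root rotation with left subtree (A ∧ B)
    obtain ⟨A2, B2, hEq2, hle2⟩ := tamari_node_inv h1
    injection hEq2 with e1 e2; subst e1; subst e2
    obtain ⟨L2, W2, hEq3, hle3⟩ := tamari_node_inv h3
    injection hEq3 with e3 e4; subst e3; subst e4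
    -- sz L1 ≤ sz A ≤ sz P ≤ sz L1
    have hA : sz A = sz P := by omega
    have hL : sz L1 = sz P := by omega
    obtain ⟨hPA, hQB⟩ := tamari_split h1 hA.symm
    obtain ⟨hAL, hW⟩ := tamari_split h3 (by omega)
    exact ⟨hL, tamari_trans hPA hAL, B, R', tamari_sz hQB, hQB, h2, hW⟩

/-- Prefix subtrees: `X` lies on the leftmost spine of `T`. -/
inductive PreAt : BTree → BTree → Prop
  | refl (t : BTree) : PreAt t t
  | step {l x : BTree} (r : BTree) : PreAt l x → PreAt (node l r) x

/-- Suffix subtrees: `Z` lies on the rightmost spine of `T`. -/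
inductive SufAt : BTree → BTree → Prop
  | refl (t : BTree) : SufAt t t
  | step (l : BTree) {r z : BTree} : SufAt r z → SufAt (node l r) z

theorem preAt_sz_le {t x} (h : PreAt t x) : sz x ≤ sz t := by
  induction h with
  | refl => exact le_refl _
  | step r _ ih => have := sz_pos r; simp [sz]; omega

theorem sufAt_sz_le {t z} (h : SufAt t z) : sz z ≤ sz t := by
  induction h with
  | refl => exact le_refl _
  | step l _ ih => have := sz_pos l; simp [sz]; omega

theorem preAt_ht {t x} (h : PreAt t x) : x = t ∨ ht x < ht t := by
  induction h with
  | refl => exact Or.inl rfl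
  | step r hx ih =>
    right
    rcases ih with rfl | hlt
    · simp [ht]; omega
    · simp [ht]; omega

theorem sufAt_ht {t z} (h : SufAt t z) : z = t ∨ ht z < ht t := by
  induction h with
  | refl => exact Or.inl rfl
  | step l hz ih =>
    right
    rcases ih with rfl | hlt
    · simp [ht]; omega
    · simp [ht]; omega

theorem preAt_balanced {t x} (h : PreAt t x) (hb : Balanced t) : Balanced x := by
  induction h with
  | refl => exact hb
  | step r _ ih => exact ih hb.2.1

theorem sufAt_balanced {t z} (h : SufAt t z) (hb : Balanced t) : Balanced z := by
  induction h with
  | refl => exact hb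
  | step l _ ih => exact ih hb.2.2

/-- Prefix pullback along a single rotation. -/
theorem rotAt_preAt {t p t' x'} (h : RotAt t p t') (hx : PreAt t' x') :
    ∃ x, PreAt t x ∧ sz x = sz x' ∧ Tamari x x' := by
  induction h with
  | here a b c =>
    -- node (node a b) c → node a (node b c)
    cases hx with
    | refl => exact ⟨node (node a b) c, PreAt.refl _,
        by simp [sz]; ring, tamari_rot_root a b c⟩
    | step r hx' =>
      exact ⟨x', PreAt.step _ (PreAt.step _ hx'), rfl, tamari_refl _⟩
  | left r h ih =>
    cases hx with
    | refl =>
      rename_i l l' p'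
      exact ⟨node l r, PreAt.refl _, by simp [sz, rotAt_sz h], 
        Relation.ReflTransGen.single ⟨false :: p', RotAt.left r h⟩⟩
    | step r' hx' =>
      obtain ⟨x, h1, h2, h3⟩ := ih hx'
      exact ⟨x, PreAt.step _ h1, h2, h3⟩
  | right l h ih =>
    cases hx with
    | refl =>
      rename_i r r' p'
      exact ⟨node l r, PreAt.refl _, by simp [sz, rotAt_sz h],
        Relation.ReflTransGen.single ⟨true :: p', RotAt.right l h⟩⟩
    | step r'' hx' =>
      exact ⟨x', PreAt.step _ hx', rfl, tamari_refl _⟩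

theorem tamari_preAt {t t' x'} (h : Tamari t t') (hx : PreAt t' x') :
    ∃ x, PreAt t x ∧ sz x = sz x' ∧ Tamari x x' := by
  induction h generalizing x' with
  | refl => exact ⟨x', hx, rfl, tamari_refl _⟩
  | tail hc hstep ih =>
    obtain ⟨p, hrot⟩ := hstep
    obtain ⟨xm, hm1, hm2, hm3⟩ := rotAt_preAt hrot hx
    obtain ⟨x, h1, h2, h3⟩ := ih hm1
    exact ⟨x, h1, h2.trans hm2, tamari_trans h3 hm3⟩

/-- Suffix push-forward along a single rotation. -/
theorem rotAt_sufAt {t p t' z} (h : RotAt t p t') (hz : SufAt t z) :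
    ∃ z', SufAt t' z' ∧ sz z' = sz z ∧ Tamari z z' := by
  induction h with
  | here a b c =>
    cases hz with
    | refl => exact ⟨node a (node b c), SufAt.refl _, by simp [sz]; ring,
        tamari_rot_root a b c⟩
    | step l hz' =>
      exact ⟨z, SufAt.step _ (SufAt.step _ hz'), rfl, tamari_refl _⟩
  | left r h ih =>
    cases hz with
    | refl =>
      rename_i l l' p'
      exact ⟨node l' r, SufAt.refl _, by simp [sz, rotAt_sz h],
        Relation.ReflTransGen.single ⟨false :: p', RotAt.left r h⟩⟩
    | step l' hz' =>
      exact ⟨z, SufAt.step _ hz', rfl, tamari_refl _⟩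
  | right l h ih =>
    cases hz with
    | refl =>
      rename_i r r' p'
      exact ⟨node l r', SufAt.refl _, by simp [sz, rotAt_sz h],
        Relation.ReflTransGen.single ⟨true :: p', RotAt.right l h⟩⟩
    | step l' hz' =>
      obtain ⟨z', h1, h2, h3⟩ := ih hz'
      exact ⟨z', SufAt.step _ h1, h2, h3⟩

theorem tamari_sufAt {t t' z} (h : Tamari t t') (hz : SufAt t z) :
    ∃ z', SufAt t' z' ∧ sz z' = sz z ∧ Tamari z z' := by
  induction h with
  | refl => exact ⟨z, hz, rfl, tamari_refl _⟩
  | tail hc hstep ih =>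
    obtain ⟨z1, h1, h2, h3⟩ := ih
    obtain ⟨p, hrot⟩ := hstep
    obtain ⟨z', h1', h2', h3'⟩ := rotAt_sufAt hrot h1
    exact ⟨z', h1', h2'.trans h2, tamari_trans h3 h3'⟩

/-- numeric facts from Balanced -/
theorem balanced_node_iff {l r} (h : Balanced (node l r)) :
    (ht r ≤ ht l + 1 ∧ ht l ≤ ht r + 1) ∧ Balanced l ∧ Balanced r := by
  obtain ⟨h1, h2, h3⟩ := h
  refine ⟨?_, h2, h3⟩
  rcases h1 with h1 | h1 | h1 <;> constructor <;> omega

/-! ### hypercube abstraction -/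

def HC (α : Type) (R : α → α → Prop) : Prop :=
  ∃ (k : ℕ) (f : α → Finset (Fin k)), Function.Bijective f ∧ ∀ a b, R a b ↔ f a ⊆ f b

theorem HC_unique {α : Type} {R : α → α → Prop} [Subsingleton α] [Nonempty α]
    (hR : ∀ a b : α, R a b) : HC α R := by
  refine ⟨0, fun _ => ∅, ⟨fun a b _ => Subsingleton.elim a b, fun s => ?_⟩,
    fun a b => by simp [hR]⟩
  obtain ⟨a⟩ := ‹Nonempty α›
  exact ⟨a, (Finset.eq_empty_of_isEmpty s).symm⟩

theorem HC_bool : HC Bool (fun a b => a = true → b = true) := by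
  refine ⟨1, fun b => if b then {0} else ∅, ⟨?_, ?_⟩, ?_⟩
  · intro a b h
    simp only at h
    cases a <;> cases b <;> simp only [if_true, if_false] at h
    · rfl
    · exact absurd (h ▸ Finset.mem_singleton_self (0 : Fin 1)) (Finset.notMem_empty _)
    · exact absurd (h.symm ▸ Finset.mem_singleton_self (0 : Fin 1)) (Finset.notMem_empty _)
    · rfl
  · intro s
    rcases Finset.eq_empty_or_nonempty s with rfl | ⟨x, hx⟩
    · exact ⟨false, rfl⟩
    · refine ⟨true, ?_⟩
      simp only [if_true]
      ext y
      simp [Fin.eq_zero y, Fin.eq_zero x ▸ hx]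
  · intro a b
    cases a <;> cases b <;> simp

theorem disjSum_subset_disjSum {α β : Type} [DecidableEq α] [DecidableEq β]
    {s s' : Finset α} {t t' : Finset β} :
    s.disjSum t ⊆ s'.disjSum t' ↔ s ⊆ s' ∧ t ⊆ t' := by
  constructor
  · intro h
    constructor
    · intro x hx
      have := h (Finset.inl_mem_disjSum.mpr hx)
      exact Finset.inl_mem_disjSum.mp this
    · intro x hx
      have := h (Finset.inr_mem_disjSum.mpr hx)
      exact Finset.inr_mem_disjSum.mp this
  · rintro ⟨h1, h2⟩ x hx
    rcases Finset.mem_disjSum.mp hx with ⟨a, ha, rfl⟩ | ⟨b, hb, rfl⟩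
    · exact Finset.inl_mem_disjSum.mpr (h1 ha)
    · exact Finset.inr_mem_disjSum.mpr (h2 hb)

theorem HC_prod {α β : Type} {Ra : α → α → Prop} {Rb : β → β → Prop}
    (ha : HC α Ra) (hb : HC β Rb) :
    HC (α × β) (fun x y => Ra x.1 y.1 ∧ Rb x.2 y.2) := by
  obtain ⟨kA, fA, ⟨hAinj, hAsurj⟩, hAiff⟩ := ha
  obtain ⟨kB, fB, ⟨hBinj, hBsurj⟩, hBiff⟩ := hb
  refine ⟨kA + kB, fun x => ((fA x.1).disjSum (fB x.2)).map finSumFinEquiv.toEmbedding,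
    ⟨?_, ?_⟩, ?_⟩
  · rintro ⟨a, b⟩ ⟨a', b'⟩ h
    simp only at h
    have h' := Finset.map_injective _ h
    have e1 : fA a = fA a' := by
      have := congrArg Finset.toLeft h'
      simpa using this
    have e2 : fB b = fB b' := by
      have := congrArg Finset.toRight h'
      simpa using this
    exact Prod.ext (hAinj e1) (hBinj e2)
  · intro S
    set U : Finset (Fin kA ⊕ Fin kB) := S.map finSumFinEquiv.symm.toEmbedding with hU
    obtain ⟨a, hA⟩ := hAsurj U.toLeft
    obtain ⟨b, hB⟩ := hBsurj U.toRight
    refine ⟨(a, b), ?_⟩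
    simp only [hA, hB, Finset.toLeft_disjSum_toRight, hU]
    rw [Finset.map_map]
    ext x
    simp
  · rintro ⟨a, b⟩ ⟨a', b'⟩
    simp only [Finset.map_subset_map, disjSum_subset_disjSum]
    rw [hAiff, hBiff]

theorem HC_congr {α β : Type} {Rb : β → β → Prop} (g : α → β)
    (hg : Function.Bijective g) (h : HC α (fun x y => Rb (g x) (g y))) : HC β Rb := by
  obtain ⟨k, f, hbij, hiff⟩ := h
  let e := Equiv.ofBijective g hg
  refine ⟨k, fun b => f (e.symm b), ⟨fun x y hxy => ?_, fun S => ?_⟩, fun x y => ?_⟩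
  · have := hbij.1 hxy
    have := congrArg e this
    simpa using this
  · obtain ⟨a, ha⟩ := hbij.2 S
    exact ⟨e a, by simpa using ha⟩
  · have hx : g (e.symm x) = x := e.apply_symm_apply x
    have hy : g (e.symm y) = y := e.apply_symm_apply y
    calc Rb x y ↔ Rb (g (e.symm x)) (g (e.symm y)) := by rw [hx, hy]
      _ ↔ f (e.symm x) ⊆ f (e.symm y) := hiff _ _

theorem HC_iff {α : Type} {R R' : α → α → Prop} (h : ∀ a b, R a b ↔ R' a b)
    (hc : HC α R) : HC α R' := by
  obtain ⟨k, f, hbij, hiff⟩ := hc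
  exact ⟨k, f, hbij, fun a b => (h a b).symm.trans (hiff a b)⟩

theorem ht_lt_left (l r : BTree) : ht l < ht (node l r) := by
  have := le_max_left (ht l) (ht r); simp only [ht]; omega

theorem ht_lt_right (l r : BTree) : ht r < ht (node l r) := by
  have := le_max_right (ht l) (ht r); simp only [ht]; omega

theorem ht_rot_eq {A B R0 L1 B1 C1 : BTree} (h1 : ht A = ht L1) (h2 : ht B = ht B1)
    (h3 : ht R0 = ht C1) (h4 : ht A = ht R0) (h5 : ht B ≤ ht R0) :
    ht (node (node A B) R0) = ht (node L1 (node B1 C1)) := by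
  simp only [ht]; omega

/-- The main induction: for balanced `T0 ≼ T1`, heights agree and the Tamari
interval is a hypercube. -/
theorem key : ∀ (n : ℕ) (T0 T1 : BTree), sz T0 ≤ n → Balanced T0 → Balanced T1 →
    Tamari T0 T1 →
    ht T0 = ht T1 ∧ HC {T : BTree // Tamari T0 T ∧ Tamari T T1} (fun a b => Tamari a.1 b.1) := by
  intro n
  induction n with
  | zero => intro T0 _ hsz; exact absurd hsz (by have := sz_pos T0; omega)
  | succ n ih =>
    intro T0 T1 hszn h0 h1 h
    cases T0 with
    | leaf =>
      have hT1 : T1 = leaf := tamari_leaf h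
      subst hT1
      refine ⟨rfl, ?_⟩
      haveI : Subsingleton {T : BTree // Tamari leaf T ∧ Tamari T leaf} :=
        ⟨fun a b => Subtype.ext ((tamari_leaf a.2.1).trans (tamari_leaf b.2.1).symm)⟩
      haveI : Nonempty {T : BTree // Tamari leaf T ∧ Tamari T leaf} :=
        ⟨⟨leaf, tamari_refl _, tamari_refl _⟩⟩
      exact HC_unique (fun a b => by
        rw [tamari_leaf a.2.1, tamari_leaf b.2.1]; exact tamari_refl _)
    | node L0 R0 =>
      cases T1 with
      | leaf =>
        exfalso
        have hsz1 : (1:ℕ) = sz L0 + sz R0 := by simpa [sz] using tamari_sz h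
        have := sz_pos L0; have := sz_pos R0
        omega
      | node L1 R1 =>
        have hszT : sz L1 + sz R1 = sz L0 + sz R0 := by
          have := tamari_sz h; simpa [sz] using this
        have hposL0 := sz_pos L0; have hposR0 := sz_pos R0
        have hposL1 := sz_pos L1; have hposR1 := sz_pos R1
        obtain ⟨L1', R1', hEq, hle⟩ := tamari_node_inv h
        injection hEq with e1 e2; subst e1; subst e2
        obtain ⟨hb0, hbL0, hbR0⟩ := balanced_node_iff h0
        obtain ⟨hb1, hbL1, hbR1⟩ := balanced_node_iff h1
        rcases eq_or_lt_of_le hle with hE | hlt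
        · -- EQ case : no root rotation
          obtain ⟨hL, hR⟩ := tamari_split h hE.symm
          have hszL0 : sz L0 ≤ n := by simp [sz] at hszn; omega
          have hszR0 : sz R0 ≤ n := by simp [sz] at hszn; omega
          obtain ⟨htL, hcL⟩ := ih L0 L1 hszL0 hbL0 hbL1 hL
          obtain ⟨htR, hcR⟩ := ih R0 R1 hszR0 hbR0 hbR1 hR
          refine ⟨by simp [ht, htL, htR], ?_⟩
          -- interval is a product
          set IL := {T : BTree // Tamari L0 T ∧ Tamari T L1}
          set IR := {T : BTree // Tamari R0 T ∧ Tamari T R1}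
          have gmem : ∀ (x : IL × IR), Tamari (node L0 R0) (node x.1.1 x.2.1) ∧
              Tamari (node x.1.1 x.2.1) (node L1 R1) := fun x =>
            ⟨tamari_node_congr x.1.2.1 x.2.2.1, tamari_node_congr x.1.2.2 x.2.2.2⟩
          set g : IL × IR → {T : BTree // Tamari (node L0 R0) T ∧ Tamari T (node L1 R1)} :=
            fun x => ⟨node x.1.1 x.2.1, gmem x⟩ with hg
          have hszP : ∀ (x : IL), sz x.1 = sz L0 := fun x => tamari_sz x.2.1
          have gbij : Function.Bijective g := by
            constructor
            · rintro ⟨⟨xa, hxa⟩, ⟨xb, hxb⟩⟩ ⟨⟨ya, hya⟩, ⟨yb, hyb⟩⟩ hxy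
              simp only [hg, Subtype.mk.injEq] at hxy
              injection hxy with e1 e2
              simp [Prod.ext_iff, Subtype.ext_iff, e1, e2]
            · rintro ⟨t, ht0, ht1⟩
              cases t with
              | leaf => exact absurd (tamari_leaf ht1).symm (by simp)
              | node LT RT =>
                obtain ⟨LT', RT', hEq', hle1⟩ := tamari_node_inv ht0
                injection hEq' with e1 e2; subst e1; subst e2
                obtain ⟨L1'', R1'', hEq'', hle2⟩ := tamari_node_inv ht1
                injection hEq'' with e3 e4; subst e3; subst e4
                have hszLT : sz LT = sz L0 := by omega
                obtain ⟨hL1, hR1⟩ := tamari_split ht0 hszLT.symm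
                obtain ⟨hL2, hR2⟩ := tamari_split ht1 (by omega)
                exact ⟨⟨⟨LT, hL1, hL2⟩, ⟨RT, hR1, hR2⟩⟩, rfl⟩
          have hiff : ∀ x y : IL × IR,
              Tamari (g x).1 (g y).1 ↔ (Tamari x.1.1 y.1.1 ∧ Tamari x.2.1 y.2.1) := by
            rintro ⟨⟨xa, hxa⟩, ⟨xb, hxb⟩⟩ ⟨⟨ya, hya⟩, ⟨yb, hyb⟩⟩
            constructor
            · intro hxy
              exact tamari_split hxy (by
                rw [tamari_sz hxa.1, tamari_sz hya.1])
            · rintro ⟨h1', h2'⟩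
              exact tamari_node_congr h1' h2'
          refine HC_congr g gbij (HC_iff (fun x y => ?_) (HC_prod hcL hcR))
          exact (hiff x y).symm
        · -- ROT case: a root rotation occurs
          cases L0 with
          | leaf =>
            exfalso; simp [sz] at hlt; omega
          | node A B =>
            have hposA := sz_pos A; have hposB := sz_pos B
            simp only [sz] at hszT hszn hlt hle
            obtain ⟨hbAB, hbA, hbB⟩ := balanced_node_iff hbL0
            -- prefix pullback of L1
            obtain ⟨X0, hpre0, hszX, hXL1⟩ :=
              tamari_preAt h (PreAt.step R1 (PreAt.refl L1))
            -- X0 lies on the left spine of A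
            have hXA : PreAt A X0 := by
              cases hpre0 with
              | refl => exfalso; simp [sz] at hszX; omega
              | step _ hpre1 =>
                cases hpre1 with
                | refl => exfalso; simp [sz] at hszX; omega
                | step _ hpre2 => exact hpre2
            -- suffix push-forward of R0
            obtain ⟨Z1, hsuf1, hszZ, hR0Z⟩ :=
              tamari_sufAt h (SufAt.step (node A B) (SufAt.refl R0))
            have hsufR1 : SufAt R1 Z1 := by
              cases hsuf1 with
              | refl => exfalso; simp [sz] at hszZ; omega
              | step _ hs => exact hs
            cases hsufR1 with
            | refl => exfalso; omega
            | step B1 hsufC1 =>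
              rename_i C1
              obtain ⟨hbB1C1, hbB1, hbC1⟩ := balanced_node_iff hbR1
              simp only [sz] at hszT
              -- heights via IH on the prefix/suffix pairs
              have hXbal : Balanced X0 := preAt_balanced hXA hbA
              have hZbal : Balanced Z1 := sufAt_balanced hsufC1 hbC1
              obtain ⟨htX, -⟩ := ih X0 L1 (by omega) hXbal hbL1 hXL1
              obtain ⟨htZ, -⟩ := ih R0 Z1 (by omega) hbR0 hZbal hR0Z
              -- numeric height bounds
              have hXle : ht X0 ≤ ht A := by
                rcases preAt_ht hXA with rfl | h2 <;> omega
              have hZle : ht Z1 ≤ ht C1 := by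
                rcases sufAt_ht hsufC1 with rfl | h2 <;> omega
              have hA_lt := ht_lt_left A B
              have hB_lt := ht_lt_right A B
              have hC1_lt := ht_lt_right B1 C1
              have hAR0' : ht A ≤ ht R0 := by have := hb0.2; omega
              have hBR0 : ht B ≤ ht R0 := by have := hb0.2; omega
              have hC1L1 : ht C1 ≤ ht L1 := by have := hb1.1; omega
              -- pin X0 = A and Z1 = C1
              have hXeq : X0 = A := by
                rcases preAt_ht hXA with rfl | h2
                · rfl
                · omega
              have hZeq : Z1 = C1 := by
                rcases sufAt_ht hsufC1 with rfl | h2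
                · rfl
                · omega
              have hXeq2 := hXeq.symm; have hZeq2 := hZeq.symm
              subst hXeq2; subst hZeq2
              have hAR0 : ht A = ht R0 := by omega
              have hszB1 : sz B1 = sz B := by omega
              -- Tamari B B1 via the master decomposition
              obtain ⟨-, -, Bm, Rm, hszBm, hBBm, hR0Rm, hW⟩ :=
                master h (by omega) (by omega)
              obtain ⟨hBmB1, hRmC1⟩ := tamari_split hW (by omega)
              have hBB1 : Tamari B B1 := tamari_trans hBBm hBmB1
              -- IHs on the three component pairs
              obtain ⟨htA1, hcA⟩ := ih A L1 (by omega) hbA hbL1 hXL1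
              obtain ⟨htB1, hcB⟩ := ih B B1 (by omega) hbB hbB1 hBB1
              obtain ⟨htC1, hcC⟩ := ih R0 C1 (by omega) hbR0 hbC1 hR0Z
              constructor
              · -- height equality
                exact ht_rot_eq htA1 htB1 htC1 hAR0 hBR0
              · -- hypercube structure of the interval
                have gmem0 : ∀ (P : {T // Tamari A T ∧ Tamari T L1})
                    (Q : {T // Tamari B T ∧ Tamari T B1})
                    (R : {T // Tamari R0 T ∧ Tamari T C1}),
                    Tamari (node (node A B) R0) (node (node P.1 Q.1) R.1) ∧
                    Tamari (node (node P.1 Q.1) R.1) (node L1 (node B1 C1)) := fun P Q R =>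
                  ⟨tamari_node_congr (tamari_node_congr P.2.1 Q.2.1) R.2.1,
                   tamari_trans
                     (tamari_node_congr (tamari_node_congr P.2.2 Q.2.2) R.2.2)
                     (tamari_rot_root L1 B1 C1)⟩
                have gmem1 : ∀ (P : {T // Tamari A T ∧ Tamari T L1})
                    (Q : {T // Tamari B T ∧ Tamari T B1})
                    (R : {T // Tamari R0 T ∧ Tamari T C1}),
                    Tamari (node (node A B) R0) (node P.1 (node Q.1 R.1)) ∧
                    Tamari (node P.1 (node Q.1 R.1)) (node L1 (node B1 C1)) := fun P Q R =>
                  ⟨tamari_trans (tamari_rot_root A B R0)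
                     (tamari_node_congr P.2.1 (tamari_node_congr Q.2.1 R.2.1)),
                   tamari_node_congr P.2.2 (tamari_node_congr Q.2.2 R.2.2)⟩
                set g : Bool × ({T // Tamari A T ∧ Tamari T L1} ×
                    ({T // Tamari B T ∧ Tamari T B1} × {T // Tamari R0 T ∧ Tamari T C1})) →
                    {T : BTree // Tamari (node (node A B) R0) T ∧
                      Tamari T (node L1 (node B1 C1))} := fun x =>
                  cond x.1
                    ⟨node x.2.1.1 (node x.2.2.1.1 x.2.2.2.1), gmem1 x.2.1 x.2.2.1 x.2.2.2⟩
                    ⟨node (node x.2.1.1 x.2.2.1.1) x.2.2.2.1, gmem0 x.2.1 x.2.2.1 x.2.2.2⟩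
                    with hgdef
                have gbij : Function.Bijective g := by
                  constructor
                  · rintro ⟨bx, ⟨⟨P, hP⟩, ⟨⟨Q, hQ⟩, ⟨R, hR⟩⟩⟩⟩
                      ⟨by2, ⟨⟨P2, hP2⟩, ⟨⟨Q2, hQ2⟩, ⟨R2, hR2⟩⟩⟩⟩ hxy
                    have hxy2 := congrArg Subtype.val hxy
                    cases bx <;> cases by2 <;>
                      simp only [hgdef, cond_false, cond_true] at hxy2
                    · injection hxy2 with e1 e2
                      injection e1 with e3 e4
                      simp [Prod.ext_iff, Subtype.ext_iff, e2, e3, e4]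
                    · exfalso
                      injection hxy2 with e1 e2
                      have s1 : sz (node P Q) = sz P2 := by rw [e1]
                      have := tamari_sz hP.1; have := tamari_sz hQ.1
                      have := tamari_sz hP2.1
                      simp [sz] at s1; omega
                    · exfalso
                      injection hxy2 with e1 e2
                      have s1 : sz P = sz (node P2 Q2) := by rw [e1]
                      have := tamari_sz hP.1; have := tamari_sz hQ2.1
                      have := tamari_sz hP2.1
                      simp [sz] at s1; omega
                    · injection hxy2 with e1 e2
                      injection e2 with e3 e4
                      simp [Prod.ext_iff, Subtype.ext_iff, e1, e3, e4]
                  · rintro ⟨t, ht0, ht1⟩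
                    cases t with
                    | leaf =>
                      exfalso
                      have := tamari_leaf ht1
                      simp at this
                    | node LT RT =>
                      obtain ⟨LTa, RTa, hEqa, hle1⟩ := tamari_node_inv ht0
                      injection hEqa with e1 e2; subst e1; subst e2
                      obtain ⟨L1a, R1a, hEqb, hle2⟩ := tamari_node_inv ht1
                      injection hEqb with e3 e4; subst e3; subst e4
                      simp only [sz] at hle1
                      by_cases hc1 : sz LT = sz A + sz B
                      · -- root not yet rotated
                        obtain ⟨hABLT, hR0RT⟩ := tamari_split ht0 (by simp [sz]; omega)
                        cases LT with
                        | leaf => exfalso; simp [sz] at hc1; omega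
                        | node P Q =>
                          obtain ⟨Pa, Qa, hEqc, hle3⟩ := tamari_node_inv hABLT
                          injection hEqc with e5 e6; subst e5; subst e6
                          obtain ⟨hszL1P, hPL1, Bn, Rn, hszBn, hQBn, hRTRn, hWn⟩ :=
                            master ht1 (by simp only [sz] at hc1; omega) (by omega)
                          have hszPA : sz P = sz A := by omega
                          obtain ⟨hAP, hBQ⟩ := tamari_split hABLT hszPA.symm
                          have hszQ : sz Q = sz B := by
                            have := tamari_sz hBQ; omega
                          obtain ⟨hBnB1, hRnC1⟩ := tamari_split hWn (by omega)
                          refine ⟨(false, (⟨P, hAP, hPL1⟩, (⟨Q, hBQ,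
                            tamari_trans hQBn hBnB1⟩, ⟨RT, hR0RT,
                            tamari_trans hRTRn hRnC1⟩))), ?_⟩
                          simp [hgdef]
                      · by_cases hc2 : sz LT = sz A
                        · -- root already rotated
                          obtain ⟨hLTL1, hRT1⟩ := tamari_split ht1 (by omega)
                          obtain ⟨-, hALT, Bp, Rp, hszBp, hBBp, hR0Rp, hWp⟩ :=
                            master ht0 (by omega) (by omega)
                          obtain ⟨Q, R, hEqd, hle4⟩ := tamari_node_inv hWp
                          subst hEqd
                          obtain ⟨Qa, Ra, hEqe, hle5⟩ := tamari_node_inv hRT1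
                          injection hEqe with e7 e8; subst e7; subst e8
                          have hszQB : sz Bp = sz Q := by omega
                          obtain ⟨hBpQ, hRpR⟩ := tamari_split hWp hszQB
                          obtain ⟨hQB1, hRC1⟩ := tamari_split hRT1 (by omega)
                          refine ⟨(true, (⟨LT, hALT, hLTL1⟩, (⟨Q,
                            tamari_trans hBBp hBpQ, hQB1⟩, ⟨R,
                            tamari_trans hR0Rp hRpR, hRC1⟩))), ?_⟩
                          simp [hgdef]
                        · -- impossible intermediate left size
                          exfalso
                          obtain ⟨hLTA, -⟩ :=
                            master ht0 (by omega) (by omega)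
                          omega
                have hiff : ∀ x y, Tamari (g x).1 (g y).1 ↔
                    ((x.1 = true → y.1 = true) ∧
                      (Tamari x.2.1.1 y.2.1.1 ∧
                        (Tamari x.2.2.1.1 y.2.2.1.1 ∧ Tamari x.2.2.2.1 y.2.2.2.1))) := by
                  rintro ⟨bx, ⟨⟨P, hP⟩, ⟨⟨Q, hQ⟩, ⟨R, hR⟩⟩⟩⟩
                    ⟨by2, ⟨⟨P2, hP2⟩, ⟨⟨Q2, hQ2⟩, ⟨R2, hR2⟩⟩⟩⟩
                  have szP := tamari_sz hP.1; have szQ := tamari_sz hQ.1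
                  have szR := tamari_sz hR.1
                  have szP2 := tamari_sz hP2.1; have szQ2 := tamari_sz hQ2.1
                  have szR2 := tamari_sz hR2.1
                  cases bx <;> cases by2 <;>
                    simp only [hgdef, cond_false, cond_true]
                  · -- false ≤ false
                    constructor
                    · intro hxy
                      obtain ⟨hPQ, hRR2⟩ := tamari_split hxy (by simp [sz]; omega)
                      obtain ⟨hPP2, hQQ2⟩ := tamari_split hPQ (by omega)
                      exact ⟨by simp, hPP2, hQQ2, hRR2⟩
                    · rintro ⟨-, h1a, h2a, h3a⟩
                      exact tamari_node_congr (tamari_node_congr h1a h2a) h3a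
                  · -- false ≤ true
                    constructor
                    · intro hxy
                      obtain ⟨-, hPP2, Bq, Rq, hszq, hQBq, hRRq, hWq⟩ :=
                        master hxy (by omega) (by omega)
                      obtain ⟨hBqQ2, hRqR2⟩ := tamari_split hWq (by omega)
                      exact ⟨by simp, hPP2, tamari_trans hQBq hBqQ2,
                        tamari_trans hRRq hRqR2⟩
                    · rintro ⟨-, h1a, h2a, h3a⟩
                      exact tamari_trans
                        (tamari_node_congr (tamari_node_congr h1a h2a) h3a)
                        (tamari_rot_root P2 Q2 R2)
                  · -- true ≤ false : impossible on both sides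
                    constructor
                    · intro hxy
                      exfalso
                      obtain ⟨W1, W2, hEqf, hle6⟩ := tamari_node_inv hxy
                      injection hEqf with e9 e10; subst e9; subst e10
                      simp [sz] at hle6; omega
                    · rintro ⟨hcontr, -⟩
                      exact absurd (hcontr (by trivial)) (by simp)
                  · -- true ≤ true
                    constructor
                    · intro hxy
                      obtain ⟨hPP2, hQR⟩ := tamari_split hxy (by omega)
                      obtain ⟨hQQ2, hRR2⟩ := tamari_split hQR (by omega)
                      exact ⟨by simp, hPP2, hQQ2, hRR2⟩
                    · rintro ⟨-, h1a, h2a, h3a⟩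
                      exact tamari_node_congr h1a (tamari_node_congr h2a h3a)
                exact HC_congr g gbij (HC_iff (fun x y => (hiff x y).symm)
                  (HC_prod HC_bool (HC_prod hcA (HC_prod hcB hcC))))


/-- For balanced trees `T0 ≼ T1`, the interval `[T0, T1]` of the Tamari order is
order-isomorphic to the poset of all subsets of a `k`-element set ordered by
inclusion (the hypercube of dimension `k`), for some `k ≥ 0`. -/
theorem interval_iso_hypercube (T0 T1 : BTree)
    (h0 : Balanced T0) (h1 : Balanced T1) (h : Tamari T0 T1) :
    ∃ (k : ℕ) (f : {T : BTree // Tamari T0 T ∧ Tamari T T1} → Finset (Fin k)),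
      Function.Bijective f ∧
      ∀ a b : {T : BTree // Tamari T0 T ∧ Tamari T T1},
        Tamari a.1 b.1 ↔ f a ⊆ f b := by
  obtain ⟨-, hc⟩ := key (sz T0) T0 T1 (le_refl _) h0 h1 h
  exact hc

end BTree
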